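/- Let p be a prime, let n ≥ 1 be an odd integer, and set q_n = (p^n − p)/(p + 1). Let L ∈ ℤ_p⟦T⟧ be nonzero with λ(L) < p^n − q_n, and let θ ∈ ℤ_p[T] be a polynomial of degree < p^n such that ω_n divides θ − ω_n^+·L in ℤ_p⟦T⟧, where ω_n^+ = ∏_{1 ≤ i ≤ n, i even} Φ_{p^i}(1+T). Then θ ≠ 0, μ(θ) = μ(L), and λ(θ) = λ(L) + q_n. -/

import Mathlib

open PowerSeries Polynomial Classical in
/-- `p`-adic valuation on `ℤ_[p]`, with value `⊤` at `0`. -/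
noncomputable def vp (p : ℕ) [Fact p.Prime] (x : ℤ_[p]) : ℕ∞ :=
  if x = 0 then ⊤ else x.valuation

/-- Iwasawa `μ`-invariant: the minimum of the `p`-adic valuations of the coefficients. -/
noncomputable def mu (p : ℕ) [Fact p.Prime] (F : PowerSeries ℤ_[p]) : ℕ∞ :=
  ⨅ i : ℕ, vp p (PowerSeries.coeff i F)

/-- Iwasawa `λ`-invariant: the least index whose coefficient valuation attains `μ`. -/
noncomputable def lam (p : ℕ) [Fact p.Prime] (F : PowerSeries ℤ_[p]) : ℕ :=
  sInf { i : ℕ | vp p (PowerSeries.coeff i F) = mu p F }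

variable {p : ℕ} [Fact p.Prime]

lemma le_vp_iff {x : ℤ_[p]} {k : ℕ} : (k : ℕ∞) ≤ vp p x ↔ (p : ℤ_[p]) ^ k ∣ x := by
  by_cases hx : x = 0
  · simp [vp, hx]
  · rw [vp, if_neg hx]
    rw [show ((p : ℤ_[p]) ^ k ∣ x) ↔ x ∈ (Ideal.span {(p : ℤ_[p]) ^ k} : Ideal ℤ_[p]) from
      (Ideal.mem_span_singleton).symm]
    rw [PadicInt.mem_span_pow_iff_le_valuation x hx]
    exact ENat.coe_le_coe

lemma vp_eq_of_dvd_not_dvd {x : ℤ_[p]} {k : ℕ} (h1 : (p : ℤ_[p]) ^ k ∣ x)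
    (h2 : ¬ (p : ℤ_[p]) ^ (k + 1) ∣ x) : vp p x = k := by
  have hle : (k : ℕ∞) ≤ vp p x := le_vp_iff.mpr h1
  have hx : x ≠ 0 := by rintro rfl; exact h2 (dvd_zero _)
  have hlt : ¬ ((k + 1 : ℕ) : ℕ∞) ≤ vp p x := fun h => h2 (le_vp_iff.mp h)
  rw [vp, if_neg hx] at *
  have h1' : k ≤ x.valuation := by exact_mod_cast hle
  have h2' : ¬ (k + 1 ≤ x.valuation) := fun h => hlt (by exact_mod_cast h)
  norm_cast
  omega

lemma exists_vp_eq_mu (F : PowerSeries ℤ_[p]) :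
    ∃ i, vp p (PowerSeries.coeff i F) = mu p F := by
  let f : ℕ → ℕ∞ := fun i => vp p (PowerSeries.coeff i F)
  have hmu : mu p F = ⨅ i, f i := rfl
  by_cases h : ∀ i, f i = ⊤
  · exact ⟨0, by rw [show vp p (PowerSeries.coeff 0 F) = f 0 from rfl, h 0, hmu,
      iInf_eq_top.mpr h]⟩
  · push_neg at h
    obtain ⟨i0, hi0⟩ := h
    have hSne : {k : ℕ | ∃ i, f i = (k : ℕ∞)}.Nonempty := by
      obtain ⟨k, hk⟩ := WithTop.ne_top_iff_exists.mp hi0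
      exact ⟨k, i0, hk.symm⟩
    obtain ⟨i1, hi1⟩ := Nat.sInf_mem hSne
    refine ⟨i1, le_antisymm ?_ (le_trans (iInf_le f i1) (le_of_eq rfl))⟩
    rw [hmu]
    refine le_iInf fun j => ?_
    show f i1 ≤ f j
    rcases eq_or_ne (f j) ⊤ with hj | hj
    · rw [hj]; exact le_top
    · obtain ⟨k, hk⟩ := WithTop.ne_top_iff_exists.mp hj
      rw [hi1, ← hk]
      have : sInf {k : ℕ | ∃ i, f i = (k : ℕ∞)} ≤ k := Nat.sInf_le ⟨j, hk.symm⟩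
      exact ENat.coe_le_coe.mpr this

lemma vp_lam_eq_mu (F : PowerSeries ℤ_[p]) :
    vp p (PowerSeries.coeff (lam p F) F) = mu p F :=
  Nat.sInf_mem (exists_vp_eq_mu F)

lemma vp_ne_mu_of_lt_lam (F : PowerSeries ℤ_[p]) {j : ℕ} (hj : j < lam p F) :
    vp p (PowerSeries.coeff j F) ≠ mu p F :=
  Nat.notMem_of_lt_sInf hj

-- coefficients of ω = (1+X)^(p^n) - 1
lemma omega_coeff_self (n : ℕ) :
    ((1 + Polynomial.X) ^ p ^ n - 1 : Polynomial ℤ_[p]).coeff (p ^ n) = 1 := by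
  have hpn : p ^ n ≠ 0 := pow_ne_zero _ (Fact.out (p := p.Prime)).ne_zero
  rw [Polynomial.coeff_sub, Polynomial.coeff_one_add_X_pow, Nat.choose_self,
    Polynomial.coeff_one, if_neg (by omega)]
  simp

lemma omega_coeff_dvd (n : ℕ) {i : ℕ} (hi : i ≠ p ^ n) :
    (p : ℤ_[p]) ∣ ((1 + Polynomial.X) ^ p ^ n - 1 : Polynomial ℤ_[p]).coeff i := by
  have hp := Fact.out (p := p.Prime)
  rw [Polynomial.coeff_sub, Polynomial.coeff_one_add_X_pow, Polynomial.coeff_one]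
  rcases eq_or_ne i 0 with rfl | hi0
  · simp
  · rw [if_neg (by omega), sub_zero]
    rcases lt_or_ge i (p ^ n) with h | h
    · have : p ∣ (p ^ n).choose i := Nat.Prime.dvd_choose_pow hp hi0 hi
      exact_mod_cast (Nat.cast_dvd_cast this : (p : ℤ_[p]) ∣ ((p ^ n).choose i : ℤ_[p]))
    · rw [Nat.choose_eq_zero_of_lt (lt_of_le_of_ne h (Ne.symm hi))]
      simp

-- cyclotomic (p^(m+1)) composed with 1+X, mod p
lemma cyclo_comp_map (m : ℕ) :
    Polynomial.map (PadicInt.toZMod (p := p))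
      ((Polynomial.cyclotomic (p ^ (m + 1)) ℤ_[p]).comp (1 + Polynomial.X))
      = Polynomial.X ^ (p ^ m * (p - 1)) := by
  have hp := Fact.out (p := p.Prime)
  rw [Polynomial.map_comp, Polynomial.map_cyclotomic, Polynomial.map_add, Polynomial.map_one,
    Polynomial.map_X, Polynomial.cyclotomic_prime_pow_eq_geom_sum hp]
  rw [Polynomial.sum_comp]
  have hX : (Polynomial.X : Polynomial (ZMod p)) ≠ 0 := Polynomial.X_ne_zero
  apply mul_right_cancel₀ (pow_ne_zero (p ^ m) hX)
  have key : ∀ i : ℕ, ((Polynomial.X ^ p ^ m) ^ i).comp (1 + Polynomial.X)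
      = (1 + Polynomial.X ^ p ^ m : Polynomial (ZMod p)) ^ i := by
    intro i
    rw [Polynomial.pow_comp, Polynomial.pow_comp, Polynomial.X_comp]
    rw [add_pow_char_pow]
    simp
  simp_rw [key]
  have := geom_sum_mul (1 + Polynomial.X ^ p ^ m : Polynomial (ZMod p)) p
  rw [add_sub_cancel_left] at this
  rw [this, add_pow_char, one_pow, add_sub_cancel_left, ← pow_mul, ← pow_add]
  congr 1
  have h1 : p - 1 + 1 = p := by have := hp.one_lt; omega
  calc p ^ m * p = p ^ m * (p - 1 + 1) := by rw [h1]
  _ = p ^ m * (p - 1) + p ^ m := by ring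

lemma p_dvd_of_toZMod_eq_zero {x : ℤ_[p]} (h : PadicInt.toZMod x = 0) : (p : ℤ_[p]) ∣ x := by
  have : x ∈ RingHom.ker (PadicInt.toZMod : ℤ_[p] →+* ZMod p) := h
  rw [PadicInt.ker_toZMod, PadicInt.maximalIdeal_eq_span_p, Ideal.mem_span_singleton] at this
  exact this

lemma sum_deg_aux (m : ℕ) :
    (p + 1) * (∑ i ∈ (Finset.Icc 1 (2 * m + 1)).filter (fun i => Even i),
      p ^ (i - 1) * (p - 1)) = p ^ (2 * m + 1) - p := by
  have hp := (Fact.out (p := p.Prime)).two_le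
  induction m with
  | zero =>
    have : Finset.Icc 1 (2 * 0 + 1) = {1} := rfl
    rw [this]
    simp [Finset.filter_singleton]
  | succ m ih =>
    have h1 : Finset.Icc 1 (2 * (m + 1) + 1) =
        insert (2 * m + 3) (insert (2 * m + 2) (Finset.Icc 1 (2 * m + 1))) := by
      ext i
      simp only [Finset.mem_Icc, Finset.mem_insert]
      omega
    rw [h1, Finset.filter_insert, Finset.filter_insert]
    have hodd : ¬ Even (2 * m + 3) := by simp [Nat.even_add_one, parity_simps]
    have heven : Even (2 * m + 2) := ⟨m + 1, by ring⟩
    rw [if_neg hodd, if_pos heven, Finset.sum_insert (by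
      intro hmem
      have := (Finset.mem_Icc.mp (Finset.mem_filter.mp hmem).1).2
      omega)]
    have hle1 : p ≤ p ^ (2 * m + 1) := Nat.le_self_pow (by omega) p
    have hle2 : p ≤ p ^ (2 * (m + 1) + 1) := Nat.le_self_pow (by omega) p
    zify [hp, hle1, hle2, (by omega : 1 ≤ p)] at ih ⊢
    have e2 : 2 * m + 2 - 1 = 2 * m + 1 := by omega
    rw [e2]
    have e3 : (2 * (m + 1) + 1) = (2 * m + 1) + 2 := by ring
    rw [e3]
    linear_combination ih

lemma P_monic (n : ℕ) : (∏ i ∈ (Finset.Icc 1 n).filter (fun i => Even i),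
    (Polynomial.cyclotomic (p ^ i) ℤ_[p]).comp (1 + Polynomial.X)).Monic := by
  apply Polynomial.monic_prod_of_monic
  intro i hi
  have h1 : (1 + Polynomial.X : Polynomial ℤ_[p]) = Polynomial.X + Polynomial.C 1 := by
    rw [Polynomial.C_1, add_comm]
  rw [h1]
  exact (Polynomial.cyclotomic.monic _ _).comp_X_add_C 1

lemma P_natDegree (n : ℕ) : (∏ i ∈ (Finset.Icc 1 n).filter (fun i => Even i),
    (Polynomial.cyclotomic (p ^ i) ℤ_[p]).comp (1 + Polynomial.X)).natDegree
    = ∑ i ∈ (Finset.Icc 1 n).filter (fun i => Even i), p ^ (i - 1) * (p - 1) := by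
  have hp := Fact.out (p := p.Prime)
  rw [Polynomial.natDegree_prod _ _ (fun i hi => ?_)]
  · apply Finset.sum_congr rfl
    intro i hi
    have hi1 : 1 ≤ i := (Finset.mem_Icc.mp (Finset.mem_filter.mp hi).1).1
    rw [Polynomial.natDegree_comp]
    have h1 : (1 + Polynomial.X : Polynomial ℤ_[p]) = Polynomial.X + Polynomial.C 1 := by
      rw [Polynomial.C_1, add_comm]
    rw [h1, Polynomial.natDegree_X_add_C, Polynomial.natDegree_cyclotomic,
      Nat.totient_prime_pow hp (by omega), mul_one]
  · have h1 : (1 + Polynomial.X : Polynomial ℤ_[p]) = Polynomial.X + Polynomial.C 1 := by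
      rw [Polynomial.C_1, add_comm]
    rw [h1]
    exact ((Polynomial.cyclotomic.monic _ _).comp_X_add_C 1).ne_zero

lemma P_map (n : ℕ) :
    Polynomial.map (PadicInt.toZMod (p := p))
      (∏ i ∈ (Finset.Icc 1 n).filter (fun i => Even i),
        (Polynomial.cyclotomic (p ^ i) ℤ_[p]).comp (1 + Polynomial.X))
      = Polynomial.X ^ (∑ i ∈ (Finset.Icc 1 n).filter (fun i => Even i), p ^ (i - 1) * (p - 1)) := by
  rw [Polynomial.map_prod]
  rw [Finset.prod_congr rfl (fun i hi => ?_), Finset.prod_pow_eq_pow_sum]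
  have hi1 : 1 ≤ i := (Finset.mem_Icc.mp (Finset.mem_filter.mp hi).1).1
  have := cyclo_comp_map (p := p) (i - 1)
  rwa [Nat.sub_add_cancel hi1] at this

lemma P_coeff_dvd (n : ℕ) {i : ℕ}
    (hi : i ≠ ∑ i ∈ (Finset.Icc 1 n).filter (fun i => Even i), p ^ (i - 1) * (p - 1)) :
    (p : ℤ_[p]) ∣ (∏ i ∈ (Finset.Icc 1 n).filter (fun i => Even i),
      (Polynomial.cyclotomic (p ^ i) ℤ_[p]).comp (1 + Polynomial.X)).coeff i := by
  set D := ∑ i ∈ (Finset.Icc 1 n).filter (fun i => Even i), p ^ (i - 1) * (p - 1) with hD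
  set P := ∏ i ∈ (Finset.Icc 1 n).filter (fun i => Even i),
      (Polynomial.cyclotomic (p ^ i) ℤ_[p]).comp (1 + Polynomial.X) with hP
  rcases lt_or_ge D i with h | h
  · rw [Polynomial.coeff_eq_zero_of_natDegree_lt (by rw [hP, P_natDegree, ← hD]; exact h)]
    exact dvd_zero _
  · apply p_dvd_of_toZMod_eq_zero
    have : (Polynomial.map (PadicInt.toZMod (p := p)) P).coeff i = PadicInt.toZMod (P.coeff i) :=
      Polynomial.coeff_map _ _
    rw [← this, hP, P_map, ← hD, Polynomial.coeff_X_pow, if_neg hi]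

lemma coeff_mul_est (A : Polynomial ℤ_[p]) (d : ℕ) (hA : ∀ i, i ≠ d → (p : ℤ_[p]) ∣ A.coeff i)
    (B : PowerSeries ℤ_[p]) (m : ℕ) (hB : ∀ j, (p : ℤ_[p]) ^ m ∣ PowerSeries.coeff j B)
    (k : ℕ) :
    ∃ e : ℤ_[p], PowerSeries.coeff k ((A : PowerSeries ℤ_[p]) * B)
      = (if d ≤ k then A.coeff d * PowerSeries.coeff (k - d) B else 0) + e
      ∧ (p : ℤ_[p]) ^ (m + 1) ∣ e := by
  rw [PowerSeries.coeff_mul]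
  have hterm : ∀ x : ℕ × ℕ, x ∈ Finset.HasAntidiagonal.antidiagonal k → x.1 ≠ d →
      (p : ℤ_[p]) ^ (m + 1) ∣ PowerSeries.coeff x.1 (A : PowerSeries ℤ_[p])
        * PowerSeries.coeff x.2 B := by
    intro x _ hx1
    rw [Polynomial.coeff_coe, pow_succ']
    exact mul_dvd_mul (hA x.1 hx1) (hB x.2)
  by_cases hd : d ≤ k
  · have hmem : (d, k - d) ∈ Finset.HasAntidiagonal.antidiagonal k := by
      rw [Finset.HasAntidiagonal.mem_antidiagonal]; omega
    refine ⟨∑ x ∈ (Finset.HasAntidiagonal.antidiagonal k).erase (d, k - d),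
      PowerSeries.coeff x.1 (A : PowerSeries ℤ_[p]) * PowerSeries.coeff x.2 B,
      ?_, ?_⟩
    · rw [if_pos hd, ← Finset.add_sum_erase _ _ hmem, Polynomial.coeff_coe]
    · refine Finset.dvd_sum fun x hx => ?_
      have hx' := Finset.mem_of_mem_erase hx
      have hne : x ≠ (d, k - d) := Finset.ne_of_mem_erase hx
      refine hterm x hx' fun h1 => hne ?_
      have := Finset.HasAntidiagonal.mem_antidiagonal.mp hx'
      ext <;> simp [h1] <;> omega
  · refine ⟨∑ x ∈ Finset.HasAntidiagonal.antidiagonal k,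
      PowerSeries.coeff x.1 (A : PowerSeries ℤ_[p]) * PowerSeries.coeff x.2 B,
      by rw [if_neg hd, zero_add], ?_⟩
    refine Finset.dvd_sum fun x hx => ?_
    refine hterm x hx fun h1 => hd ?_
    have := Finset.HasAntidiagonal.mem_antidiagonal.mp hx
    omega

theorem stmt_12 (p : ℕ) [Fact p.Prime] (n : ℕ) (hn1 : 1 ≤ n) (hn : Odd n)
    (L : PowerSeries ℤ_[p]) (hL : L ≠ 0) (hlam : lam p L < p ^ n - (p ^ n - p) / (p + 1))
    (θ : Polynomial ℤ_[p]) (hdeg : θ.degree < (p ^ n : ℕ))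
    (hdvd : (((1 + Polynomial.X) ^ p ^ n - 1 : Polynomial ℤ_[p]) : PowerSeries ℤ_[p])
      ∣ ((θ : PowerSeries ℤ_[p])
        - ((∏ i ∈ (Finset.Icc 1 n).filter (fun i => Even i),
            (Polynomial.cyclotomic (p ^ i) ℤ_[p]).comp (1 + Polynomial.X) : Polynomial ℤ_[p]) : PowerSeries ℤ_[p]) * L)) :
    θ ≠ 0 ∧ mu p (θ : PowerSeries ℤ_[p]) = mu p L
      ∧ lam p (θ : PowerSeries ℤ_[p]) = lam p L + (p ^ n - p) / (p + 1) := by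
  classical
  have hp := Fact.out (p := p.Prime)
  set q : ℕ := (p ^ n - p) / (p + 1) with hq
  set P : Polynomial ℤ_[p] := ∏ i ∈ (Finset.Icc 1 n).filter (fun i => Even i),
      (Polynomial.cyclotomic (p ^ i) ℤ_[p]).comp (1 + Polynomial.X) with hPdef
  set ω : Polynomial ℤ_[p] := (1 + Polynomial.X) ^ p ^ n - 1 with hωdef
  -- arithmetic facts
  have hkey : (p + 1) * (∑ i ∈ (Finset.Icc 1 n).filter (fun i => Even i),
      p ^ (i - 1) * (p - 1)) = p ^ n - p := by
    obtain ⟨m, hm⟩ := hn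
    have hm' : n = 2 * m + 1 := by omega
    subst hm'
    exact sum_deg_aux m
  have hDq : (∑ i ∈ (Finset.Icc 1 n).filter (fun i => Even i), p ^ (i - 1) * (p - 1)) = q := by
    rw [hq]
    symm
    apply Nat.div_eq_of_eq_mul_left (by omega)
    rw [← hkey]; ring
  have hqle : q ≤ p ^ n := by
    have h1 : (∑ i ∈ (Finset.Icc 1 n).filter (fun i => Even i), p ^ (i - 1) * (p - 1))
        ≤ (p + 1) * (∑ i ∈ (Finset.Icc 1 n).filter (fun i => Even i), p ^ (i - 1) * (p - 1)) :=
      Nat.le_mul_of_pos_left _ (by omega)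
    rw [hkey, hDq] at h1
    exact le_trans h1 (Nat.sub_le _ _)
  have hkstar : lam p L + q < p ^ n := by
    have h2 := Nat.add_lt_add_right hlam q
    rwa [Nat.sub_add_cancel hqle] at h2
  -- P facts
  have hPq1 : P.coeff q = 1 := by
    have h3 := (P_monic (p := p) n).coeff_natDegree
    rwa [P_natDegree, hDq] at h3
  have hPdvd : ∀ i, i ≠ q → (p : ℤ_[p]) ∣ P.coeff i := by
    intro i hi
    exact P_coeff_dvd n (by rwa [hDq])
  -- ω facts
  have hωdvd : ∀ i, i ≠ p ^ n → (p : ℤ_[p]) ∣ ω.coeff i := fun i hi => omega_coeff_dvd n hi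
  have hω1 : ω.coeff (p ^ n) = 1 := omega_coeff_self n
  -- decomposition θ = P*L + ω*G
  obtain ⟨G, hG⟩ := hdvd
  have hθ : (θ : PowerSeries ℤ_[p]) = (P : PowerSeries ℤ_[p]) * L
      + (ω : PowerSeries ℤ_[p]) * G := by
    have h4 := eq_add_of_sub_eq hG
    rw [h4, add_comm]
  -- μ0
  have hμtop : mu p L ≠ ⊤ := by
    have h5 : ∃ j, PowerSeries.coeff j L ≠ 0 := by
      by_contra h
      push_neg at h
      exact hL (PowerSeries.ext h)
    obtain ⟨j, hj⟩ := h5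
    have h6 : vp p (PowerSeries.coeff j L) ≠ ⊤ := by
      rw [vp, if_neg hj]; exact ENat.coe_ne_top _
    exact ne_top_of_le_ne_top h6 (iInf_le _ j)
  obtain ⟨μ0, hμ0e0⟩ := WithTop.ne_top_iff_exists.mp hμtop
  have hμ0e : mu p L = (μ0 : ℕ∞) := by exact_mod_cast hμ0e0.symm
  have hmuL : ∀ j, (μ0 : ℕ∞) ≤ vp p (PowerSeries.coeff j L) := by
    intro j
    have h := iInf_le (fun i => vp p (PowerSeries.coeff i L)) j
    rw [show (⨅ i, vp p (PowerSeries.coeff i L)) = mu p L from rfl, hμ0e] at h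
    exact h
  have ha : ∀ j, (p : ℤ_[p]) ^ μ0 ∣ PowerSeries.coeff j L := fun j =>
    le_vp_iff.mp (hmuL j)
  have haL : ¬ (p : ℤ_[p]) ^ (μ0 + 1) ∣ PowerSeries.coeff (lam p L) L := by
    intro h
    have h7 : ((μ0 + 1 : ℕ) : ℕ∞) ≤ vp p (PowerSeries.coeff (lam p L) L) :=
      le_vp_iff.mpr h
    rw [vp_lam_eq_mu, hμ0e, Nat.cast_le] at h7
    omega
  have halt : ∀ j, j < lam p L → (p : ℤ_[p]) ^ (μ0 + 1) ∣ PowerSeries.coeff j L := by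
    intro j hj
    apply le_vp_iff.mp
    have h8 : (μ0 : ℕ∞) ≤ vp p (PowerSeries.coeff j L) := hmuL j
    have h9 : vp p (PowerSeries.coeff j L) ≠ (μ0 : ℕ∞) := by
      rw [← hμ0e]; exact vp_ne_mu_of_lt_lam L hj
    have h10 : (μ0 : ℕ∞) < vp p (PowerSeries.coeff j L) :=
      lt_of_le_of_ne h8 (Ne.symm h9)
    have := (ENat.add_one_le_iff (by simp : (μ0 : ℕ∞) ≠ ⊤)).mpr h10
    exact_mod_cast this
  -- θ high coefficients vanish
  have hθhigh : ∀ k, p ^ n ≤ k → θ.coeff k = 0 := by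
    intro k hk
    apply Polynomial.coeff_eq_zero_of_degree_lt
    refine lt_of_lt_of_le hdeg ?_
    exact_mod_cast Nat.cast_le.mpr hk
  -- all coefficients of P*L divisible by p^μ0 (indeed by p^t for any t with a bound)
  have hPLdvd : ∀ t, t ≤ μ0 → ∀ k, (p : ℤ_[p]) ^ t ∣
      PowerSeries.coeff k ((P : PowerSeries ℤ_[p]) * L) := by
    intro t ht k
    rw [PowerSeries.coeff_mul]
    refine Finset.dvd_sum fun x _ => ?_
    exact Dvd.dvd.mul_left (dvd_trans (pow_dvd_pow (p : ℤ_[p]) ht) (ha x.2)) _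
  -- G coefficients divisible by p^μ0
  have hgt : ∀ t, t ≤ μ0 → ∀ j, (p : ℤ_[p]) ^ t ∣ PowerSeries.coeff j G := by
    intro t
    induction t with
    | zero => intro _ j; simpa using one_dvd _
    | succ t ih =>
      intro ht j
      obtain ⟨e, he, hed⟩ := coeff_mul_est ω (p ^ n) hωdvd G t (ih (by omega)) (j + p ^ n)
      rw [if_pos (Nat.le_add_left _ _), hω1, one_mul, Nat.add_sub_cancel] at he
      have h0 : PowerSeries.coeff (j + p ^ n) (θ : PowerSeries ℤ_[p]) = 0 := by
        rw [Polynomial.coeff_coe, hθhigh _ (Nat.le_add_left _ _)]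
      rw [hθ, map_add, he] at h0
      have h11 : PowerSeries.coeff j G =
          -(PowerSeries.coeff (j + p ^ n) ((P : PowerSeries ℤ_[p]) * L)) - e := by
        linear_combination h0
      rw [h11]
      exact dvd_sub (dvd_neg.mpr (hPLdvd (t + 1) ht _)) hed
  -- the main decomposition for low coefficients
  have hdecomp : ∀ k, k < p ^ n → ∃ e, θ.coeff k =
      (if q ≤ k then PowerSeries.coeff (k - q) L else 0) + e
      ∧ (p : ℤ_[p]) ^ (μ0 + 1) ∣ e := by
    intro k hk
    obtain ⟨e1, he1, hd1⟩ := coeff_mul_est P q hPdvd L μ0 ha k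
    obtain ⟨e2, he2, hd2⟩ := coeff_mul_est ω (p ^ n) hωdvd G μ0 (hgt μ0 le_rfl) k
    rw [if_neg (by omega)] at he2
    refine ⟨e1 + e2, ?_, dvd_add hd1 hd2⟩
    have h12 : θ.coeff k = PowerSeries.coeff k ((P : PowerSeries ℤ_[p]) * L)
        + PowerSeries.coeff k ((ω : PowerSeries ℤ_[p]) * G) := by
      rw [← Polynomial.coeff_coe, hθ, map_add]
    rw [h12, he1, he2, hPq1]
    by_cases hqk : q ≤ k
    · rw [if_pos hqk, if_pos hqk, one_mul]; ring
    · rw [if_neg hqk, if_neg hqk]; ring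
  -- all coefficients of θ divisible by p^μ0
  have hθall : ∀ k, (p : ℤ_[p]) ^ μ0 ∣ θ.coeff k := by
    intro k
    rcases lt_or_ge k (p ^ n) with h | h
    · obtain ⟨e, he, hd⟩ := hdecomp k h
      rw [he]
      refine dvd_add ?_ (dvd_trans (pow_dvd_pow (p : ℤ_[p]) (Nat.le_succ μ0)) hd)
      split
      · exact ha _
      · exact dvd_zero _
    · rw [hθhigh k h]; exact dvd_zero _
  -- the critical coefficient
  obtain ⟨e, he, hed⟩ := hdecomp (q + lam p L) (by omega)
  rw [if_pos (Nat.le_add_right _ _), Nat.add_sub_cancel_left] at he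
  have hnotdvd : ¬ (p : ℤ_[p]) ^ (μ0 + 1) ∣ θ.coeff (q + lam p L) := by
    intro h
    apply haL
    have h13 : PowerSeries.coeff (lam p L) L = θ.coeff (q + lam p L) - e := by
      rw [he]; ring
    rw [h13]
    exact dvd_sub h hed
  have hvpk : vp p (θ.coeff (q + lam p L)) = (μ0 : ℕ∞) :=
    vp_eq_of_dvd_not_dvd (hθall _) hnotdvd
  have hθne : θ ≠ 0 := by
    intro h
    apply hnotdvd
    rw [h, Polynomial.coeff_zero]
    exact dvd_zero _
  -- mu θ = μ0
  have hmuθ : mu p (θ : PowerSeries ℤ_[p]) = (μ0 : ℕ∞) := by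
    apply le_antisymm
    · have h14 := iInf_le (fun i => vp p (PowerSeries.coeff i (θ : PowerSeries ℤ_[p])))
        (q + lam p L)
      rw [Polynomial.coeff_coe, hvpk] at h14
      exact h14
    · refine le_iInf fun k => ?_
      rw [Polynomial.coeff_coe]
      exact le_vp_iff.mpr (hθall k)
  -- low coefficients of θ are more divisible
  have hlow : ∀ i, i < q + lam p L → (p : ℤ_[p]) ^ (μ0 + 1) ∣ θ.coeff i := by
    intro i hi
    obtain ⟨e', he', hed'⟩ := hdecomp i (by omega)
    rw [he']
    refine dvd_add ?_ hed'
    by_cases hqi : q ≤ i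
    · rw [if_pos hqi]
      exact halt _ (by omega)
    · rw [if_neg hqi]
      exact dvd_zero _
  -- lam θ = q + lam L
  have hmem : (q + lam p L) ∈ {i : ℕ | vp p (PowerSeries.coeff i (θ : PowerSeries ℤ_[p]))
      = mu p (θ : PowerSeries ℤ_[p])} := by
    show vp p _ = _
    rw [Polynomial.coeff_coe, hvpk, hmuθ]
  have hnotmem : ∀ i, i < q + lam p L →
      i ∉ {i : ℕ | vp p (PowerSeries.coeff i (θ : PowerSeries ℤ_[p]))
      = mu p (θ : PowerSeries ℤ_[p])} := by
    intro i hi hmem'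
    have h15 : vp p (θ.coeff i) = (μ0 : ℕ∞) := by
      have := hmem'
      rwa [Set.mem_setOf_eq, Polynomial.coeff_coe, hmuθ] at this
    have h16 : ((μ0 + 1 : ℕ) : ℕ∞) ≤ vp p (θ.coeff i) := le_vp_iff.mpr (hlow i hi)
    rw [h15, Nat.cast_le] at h16
    omega
  have hlamθ : lam p (θ : PowerSeries ℤ_[p]) = q + lam p L := by
    apply le_antisymm
    · exact Nat.sInf_le hmem
    · refine le_csInf ⟨_, hmem⟩ fun m hm => ?_
      by_contra hcon
      exact hnotmem m (by omega) hm
  exact ⟨hθne, by rw [hmuθ, ← hμ0e], by rw [hlamθ, add_comm]⟩
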